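/- For all nonnegative integers m and n, ∫_{[0,∞)^3} (x₁x₂ + x₁x₃ + x₂x₃)^m (x₁ + x₂ + x₃)^n e^{−(x₁+x₂+x₃)} dx₁ dx₂ dx₃ = (m! · (2m + n + 2)! · (3/2)_m / (2m + 2)!) · (4/3)^m · (1 + Σ_{s=1}^m (3^s · s!) / (4^s · (3/2)_s)). -/

import Mathlib

open MeasureTheory Finset

/-- Pochhammer symbol `(y)ₘ = ∏_{i=0}^{m-1} (y + i)` -/
noncomputable def poch (y : ℝ) (m : ℕ) : ℝ := ∏ i ∈ Finset.range m, (y + i)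

open Real

/-! ### Auxiliary analytic lemmas -/

noncomputable def gg (k : ℕ) : ℝ → ℝ := fun x => x ^ k * Real.exp (-x)

lemma integrableOn_g (k : ℕ) :
    IntegrableOn (fun x : ℝ => x ^ k * Real.exp (-x)) (Set.Ici 0) := by
  rw [integrableOn_Ici_iff_integrableOn_Ioi]
  have h := Real.GammaIntegral_convergent (s := (k : ℝ) + 1) (by positivity)
  refine (h.congr_fun ?_ measurableSet_Ioi)
  intro x hx
  simp only [add_sub_cancel_right, Real.rpow_natCast]
  ring

lemma integral_g (k : ℕ) :
    ∫ x in Set.Ici (0:ℝ), x ^ k * Real.exp (-x) = (k.factorial : ℝ) := by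
  rw [MeasureTheory.integral_Ici_eq_integral_Ioi]
  have h := Real.Gamma_eq_integral (s := (k : ℝ) + 1) (by positivity)
  rw [Real.Gamma_nat_eq_factorial] at h
  calc ∫ t in Set.Ioi (0:ℝ), t ^ k * Real.exp (-t)
      = ∫ x in Set.Ioi (0:ℝ), Real.exp (-x) * x ^ ((k : ℝ) + 1 - 1) :=
        setIntegral_congr_fun measurableSet_Ioi (fun x _ => by
          simp only [add_sub_cancel_right, Real.rpow_natCast]; ring)
    _ = (k.factorial : ℝ) := h.symm

lemma indicator_prod_eq (a b c : ℕ) :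
    (Set.univ.pi fun _ : Fin 3 => Set.Ici (0:ℝ)).indicator
      (fun x : Fin 3 → ℝ => gg a (x 0) * (gg b (x 1) * gg c (x 2))) =
    fun x : Fin 3 → ℝ =>
      ∏ i : Fin 3, (Set.Ici (0:ℝ)).indicator (gg (![a, b, c] i)) (x i) := by
  funext x
  by_cases h : x ∈ Set.univ.pi fun _ : Fin 3 => Set.Ici (0:ℝ)
  · rw [Set.indicator_of_mem h]
    have h' : ∀ i : Fin 3, x i ∈ Set.Ici (0:ℝ) := fun i => h i (Set.mem_univ i)
    rw [Fin.prod_univ_three]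
    simp only [Set.indicator_of_mem (h' 0), Set.indicator_of_mem (h' 1),
      Set.indicator_of_mem (h' 2), Matrix.cons_val_zero, Matrix.cons_val_one, Matrix.head_cons,
      Matrix.cons_val_two, Matrix.tail_cons]
    ring
  · rw [Set.indicator_of_notMem h]
    rw [Set.mem_univ_pi] at h
    push_neg at h
    obtain ⟨i, hi⟩ := h
    exact (Finset.prod_eq_zero (Finset.mem_univ i) (Set.indicator_of_notMem hi _)).symm

lemma integrable_term (a b c : ℕ) :
    IntegrableOn (fun x : Fin 3 → ℝ => gg a (x 0) * (gg b (x 1) * gg c (x 2)))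
      (Set.univ.pi fun _ : Fin 3 => Set.Ici (0:ℝ)) := by
  have hS : MeasurableSet (Set.univ.pi fun _ : Fin 3 => Set.Ici (0:ℝ)) :=
    MeasurableSet.univ_pi fun _ => measurableSet_Ici
  rw [← integrable_indicator_iff hS, indicator_prod_eq]
  exact Integrable.fintype_prod (f := fun i => (Set.Ici (0:ℝ)).indicator (gg (![a,b,c] i)))
    (fun i => (integrable_indicator_iff measurableSet_Ici).mpr (integrableOn_g _))

lemma key_prod (a b c : ℕ) :
    ∫ x : Fin 3 → ℝ in Set.univ.pi fun _ => Set.Ici (0:ℝ),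
      gg a (x 0) * (gg b (x 1) * gg c (x 2)) =
    (a.factorial : ℝ) * ((b.factorial : ℝ) * (c.factorial : ℝ)) := by
  have hS : MeasurableSet (Set.univ.pi fun _ : Fin 3 => Set.Ici (0:ℝ)) :=
    MeasurableSet.univ_pi fun _ => measurableSet_Ici
  rw [← integral_indicator hS, indicator_prod_eq,
    integral_fintype_prod_volume_eq_prod (ι := Fin 3) (fun i => (Set.Ici (0:ℝ)).indicator (gg (![a,b,c] i)))]
  rw [Fin.prod_univ_three]
  simp only [Matrix.cons_val_zero, Matrix.cons_val_one, Matrix.head_cons, Matrix.cons_val_two,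
    Matrix.tail_cons]
  rw [integral_indicator measurableSet_Ici, integral_indicator measurableSet_Ici,
    integral_indicator measurableSet_Ici]
  simp only [gg]
  rw [integral_g, integral_g, integral_g]; ring

lemma expand (m n : ℕ) (x y z : ℝ) :
    (x * y + x * z + y * z) ^ m * (x + y + z) ^ n * Real.exp (-(x + y + z)) =
    ∑ s ∈ range (m + 1), ∑ t ∈ range (n + 1), ∑ u ∈ range (s + t + 1),
      ((m.choose s : ℝ) * (n.choose t : ℝ) * ((s + t).choose u : ℝ)) *
        (gg (m - s + u) x * (gg ((m - s) + (s + t - u)) y * gg (s + (n - t)) z)) := by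
  have hE : Real.exp (-(x + y + z)) = Real.exp (-x) * Real.exp (-y) * Real.exp (-z) := by
    rw [show -(x + y + z) = -x + -y + -z by ring, Real.exp_add, Real.exp_add]
  rw [hE, show x * y + x * z + y * z = (x + y) * z + x * y by ring,
    show x + y + z = (x + y) + z from rfl, add_pow, add_pow, Finset.sum_mul, Finset.sum_mul]
  refine Finset.sum_congr rfl fun s hs => ?_
  rw [Finset.mul_sum, Finset.sum_mul]
  refine Finset.sum_congr rfl fun t ht => ?_
  have h1 : ((x + y) * z) ^ s * (x * y) ^ (m - s) * (m.choose s : ℝ) *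
      ((x + y) ^ t * z ^ (n - t) * (n.choose t : ℝ)) *
      (Real.exp (-x) * Real.exp (-y) * Real.exp (-z)) =
      (x + y) ^ (s + t) *
        ((m.choose s : ℝ) * (n.choose t : ℝ) * (x ^ (m - s) * y ^ (m - s) *
          (z ^ (s + (n - t)) * (Real.exp (-x) * Real.exp (-y) * Real.exp (-z))))) := by
    rw [mul_pow, mul_pow, pow_add (x + y), pow_add z]; ring
  rw [h1, add_pow, Finset.sum_mul]
  refine Finset.sum_congr rfl fun u hu => ?_
  simp only [gg]
  rw [pow_add x (m - s) u, pow_add y (m - s) (s + t - u), pow_add z s (n - t)]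
  ring

lemma reduce (m n : ℕ) :
    ∫ x : Fin 3 → ℝ in Set.univ.pi fun _ => Set.Ici (0 : ℝ),
        (x 0 * x 1 + x 0 * x 2 + x 1 * x 2) ^ m * (x 0 + x 1 + x 2) ^ n *
          Real.exp (-(x 0 + x 1 + x 2)) =
    ∑ s ∈ range (m + 1), ∑ t ∈ range (n + 1), ∑ u ∈ range (s + t + 1),
      ((m.choose s : ℝ) * (n.choose t : ℝ) * ((s + t).choose u : ℝ)) *
        (((m - s + u).factorial : ℝ) * ((((m - s) + (s + t - u)).factorial : ℝ) *
          ((s + (n - t)).factorial : ℝ))) := by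
  have hint3 : ∀ s t u : ℕ, Integrable
      (fun x : Fin 3 → ℝ => ((m.choose s : ℝ) * (n.choose t : ℝ) * ((s + t).choose u : ℝ)) *
        (gg (m - s + u) (x 0) * (gg ((m - s) + (s + t - u)) (x 1) * gg (s + (n - t)) (x 2))))
      (volume.restrict (Set.univ.pi fun _ : Fin 3 => Set.Ici (0:ℝ))) :=
    fun s t u => (integrable_term _ _ _).const_mul _
  have hint2 : ∀ s t : ℕ, Integrable
      (fun x : Fin 3 → ℝ => ∑ u ∈ range (s + t + 1),
        ((m.choose s : ℝ) * (n.choose t : ℝ) * ((s + t).choose u : ℝ)) *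
        (gg (m - s + u) (x 0) * (gg ((m - s) + (s + t - u)) (x 1) * gg (s + (n - t)) (x 2))))
      (volume.restrict (Set.univ.pi fun _ : Fin 3 => Set.Ici (0:ℝ))) :=
    fun s t => integrable_finset_sum _ (fun u _ => hint3 s t u)
  have hint1 : ∀ s : ℕ, Integrable
      (fun x : Fin 3 → ℝ => ∑ t ∈ range (n + 1), ∑ u ∈ range (s + t + 1),
        ((m.choose s : ℝ) * (n.choose t : ℝ) * ((s + t).choose u : ℝ)) *
        (gg (m - s + u) (x 0) * (gg ((m - s) + (s + t - u)) (x 1) * gg (s + (n - t)) (x 2))))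
      (volume.restrict (Set.univ.pi fun _ : Fin 3 => Set.Ici (0:ℝ))) :=
    fun s => integrable_finset_sum _ (fun t _ => hint2 s t)
  calc ∫ x : Fin 3 → ℝ in Set.univ.pi fun _ => Set.Ici (0 : ℝ),
        (x 0 * x 1 + x 0 * x 2 + x 1 * x 2) ^ m * (x 0 + x 1 + x 2) ^ n *
          Real.exp (-(x 0 + x 1 + x 2))
      = ∫ x : Fin 3 → ℝ in Set.univ.pi fun _ => Set.Ici (0 : ℝ),
          ∑ s ∈ range (m + 1), ∑ t ∈ range (n + 1), ∑ u ∈ range (s + t + 1),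
            ((m.choose s : ℝ) * (n.choose t : ℝ) * ((s + t).choose u : ℝ)) *
              (gg (m - s + u) (x 0) * (gg ((m - s) + (s + t - u)) (x 1) *
                gg (s + (n - t)) (x 2))) :=
        integral_congr_ae (Filter.Eventually.of_forall fun x =>
          expand m n (x 0) (x 1) (x 2))
    _ = _ := by
        rw [integral_finset_sum _ (fun s _ => hint1 s)]
        refine Finset.sum_congr rfl fun s _ => ?_
        rw [integral_finset_sum _ (fun t _ => hint2 s t)]
        refine Finset.sum_congr rfl fun t _ => ?_
        rw [integral_finset_sum _ (fun u _ => hint3 s t u)]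
        refine Finset.sum_congr rfl fun u _ => ?_
        rw [MeasureTheory.integral_const_mul, key_prod]

/-! ### Combinatorial lemmas -/

lemma N1 (p : ℕ) : ∀ q n : ℕ,
    ∑ u ∈ range (n + 1), (p + u).choose p * (q + (n - u)).choose q
      = (p + q + n + 1).choose n := by
  intro q
  induction q with
  | zero =>
    intro n
    simp only [Nat.zero_add, Nat.choose_zero_right, mul_one, Nat.add_zero]
    have h1 : ∑ u ∈ range (n + 1), (p + u).choose p
        = ∑ i ∈ Icc p (p + n), i.choose p := by
      rw [← Finset.Ico_add_one_right_eq_Icc, Finset.sum_Ico_eq_sum_range,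
        show p + n + 1 - p = n + 1 by omega]
    rw [h1, Nat.sum_Icc_choose]
    rw [show p + n + 1 = p + 0 + n + 1 by omega]
    have := Nat.choose_symm (show p + 1 ≤ p + 0 + n + 1 by omega)
    rw [show p + 0 + n + 1 - (p + 1) = n by omega] at this
    exact this.symm
  | succ q ihq =>
    intro n
    induction n with
    | zero => simp
    | succ n ihn =>
      rw [Finset.sum_range_succ]
      have h1 : ∀ u ∈ range (n + 1),
          (p + u).choose p * (q + 1 + (n + 1 - u)).choose (q + 1)
          = (p + u).choose p * (q + (n + 1 - u)).choose q
            + (p + u).choose p * (q + 1 + (n - u)).choose (q + 1) := by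
        intro u hu
        have hu' := Finset.mem_range.mp hu
        rw [show q + 1 + (n + 1 - u) = (q + 1 + (n - u)) + 1 by omega,
          Nat.choose_succ_succ, mul_add]
        congr 3
        omega
      rw [Finset.sum_congr rfl h1, Finset.sum_add_distrib, ihn]
      have key : (∑ u ∈ range (n + 1), (p + u).choose p * (q + (n + 1 - u)).choose q)
          + (p + (n + 1)).choose p * (q + (n + 1 - (n + 1))).choose q
          = (p + q + (n + 1) + 1).choose (n + 1) := by
        rw [← Finset.sum_range_succ]; exact ihq (n + 1)
      simp only [Nat.sub_self, Nat.add_zero, Nat.choose_self, mul_one] at key ⊢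
      rw [show p + (q + 1) + (n + 1) + 1 = (p + q + (n + 1) + 1) + 1 by omega,
        Nat.choose_succ_succ, ← key,
        show p + q + (n + 1) + 1 = p + (q + 1) + n + 1 by omega]
      ring

lemma perterm (p q n t : ℕ) (ht : t ≤ n) :
    n.choose t * (q + (n - t)).factorial * (p + t).factorial
    = n.factorial * q.factorial * p.factorial *
      ((p + t).choose p * (q + (n - t)).choose q) := by
  have h1 : (p + t).choose p * p.factorial * t.factorial = (p + t).factorial := by
    have := Nat.choose_mul_factorial_mul_factorial (show p ≤ p + t by omega)
    rwa [show p + t - p = t by omega] at this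
  have h2 : (q + (n - t)).choose q * q.factorial * (n - t).factorial
      = (q + (n - t)).factorial := by
    have := Nat.choose_mul_factorial_mul_factorial (show q ≤ q + (n - t) by omega)
    rwa [show q + (n - t) - q = n - t by omega] at this
  have h3 : n.choose t * t.factorial * (n - t).factorial = n.factorial :=
    Nat.choose_mul_factorial_mul_factorial ht
  rw [← h1, ← h2, ← h3]
  ring

lemma choose_eq_div (a b : ℕ) (h : b ≤ a) :
    (a.choose b : ℝ) = (a.factorial : ℝ) / ((b.factorial : ℝ) * ((a - b).factorial : ℝ)) := by
  have := Nat.choose_mul_factorial_mul_factorial h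
  have h1 : ((a.choose b * b.factorial * (a - b).factorial : ℕ) : ℝ) = (a.factorial : ℝ) := by
    rw [this]
  push_cast at h1
  field_simp
  linarith [h1]

lemma S2 (p q n : ℕ) :
    ∑ t ∈ range (n + 1),
      (n.choose t : ℝ) * ((q + (n - t)).factorial : ℝ) * ((p + t).factorial : ℝ)
    = (q.factorial : ℝ) * (p.factorial : ℝ) * ((p + q + n + 1).factorial : ℝ)
        / ((p + q + 1).factorial : ℝ) := by
  have step1 : ∑ t ∈ range (n + 1),
      (n.choose t : ℝ) * ((q + (n - t)).factorial : ℝ) * ((p + t).factorial : ℝ)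
      = ((n.factorial * q.factorial * p.factorial : ℕ) : ℝ) *
        ((∑ t ∈ range (n + 1), (p + t).choose p * (q + (n - t)).choose q : ℕ) : ℝ) := by
    push_cast
    rw [Finset.mul_sum]
    refine Finset.sum_congr rfl fun t htm => ?_
    have ht := Nat.lt_succ_iff.mp (Finset.mem_range.mp htm)
    have := perterm p q n t ht
    have hc : ((n.choose t * (q + (n - t)).factorial * (p + t).factorial : ℕ) : ℝ)
        = ((n.factorial * q.factorial * p.factorial *
          ((p + t).choose p * (q + (n - t)).choose q) : ℕ) : ℝ) := by rw [this]
    push_cast at hc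
    linarith [hc]
  rw [step1, N1 p q n]
  rw [choose_eq_div (p + q + n + 1) n (by omega), show p + q + n + 1 - n = p + q + 1 by omega]
  have h1 : (n.factorial : ℝ) ≠ 0 := Nat.cast_ne_zero.mpr (Nat.factorial_ne_zero n)
  have h2 : ((p + q + 1).factorial : ℝ) ≠ 0 := Nat.cast_ne_zero.mpr (Nat.factorial_ne_zero _)
  push_cast
  field_simp

noncomputable def LL (m : ℕ) : ℝ :=
  ∑ j ∈ range (m + 1),
    (j.factorial : ℝ) * ((m + j + 1).factorial : ℝ) / ((2 * j + 1).factorial : ℝ)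

noncomputable def KK (m : ℕ) : ℝ :=
  ∑ s ∈ range (m + 1),
    (3 : ℝ) ^ s * (s.factorial : ℝ) ^ 2 / ((2 * s + 1).factorial : ℝ)

lemma fac_ne (k : ℕ) : ((k.factorial : ℝ)) ≠ 0 := Nat.cast_ne_zero.mpr (Nat.factorial_ne_zero k)

lemma telescope (m : ℕ) :
    ∑ j ∈ range (m + 1), ((3 * j : ℝ) - m) *
      ((j.factorial : ℝ) * ((m + j + 1).factorial : ℝ) / ((2 * j + 1).factorial : ℝ)) = 0 := by
  have hstep : ∀ j : ℕ,
      ((3 * j : ℝ) - m) *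
        ((j.factorial : ℝ) * ((m + j + 1).factorial : ℝ) / ((2 * j + 1).factorial : ℝ))
      = (-2 * ((j+1).factorial : ℝ) * ((m + (j+1) + 1).factorial : ℝ)
            / ((2 * (j+1)).factorial : ℝ))
        - (-2 * (j.factorial : ℝ) * ((m + j + 1).factorial : ℝ)
            / ((2 * j).factorial : ℝ)) := by
    intro j
    have e1 : (j + 1).factorial = (j + 1) * j.factorial := Nat.factorial_succ j
    have e2 : (m + (j + 1) + 1).factorial = (m + j + 2) * (m + j + 1).factorial := by
      rw [show m + (j + 1) + 1 = (m + j + 1) + 1 by omega, Nat.factorial_succ]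
    have e3 : (2 * (j + 1)).factorial = (2 * j + 2) * ((2 * j + 1) * (2 * j).factorial) := by
      rw [show 2 * (j + 1) = (2 * j + 1) + 1 by omega, Nat.factorial_succ, Nat.factorial_succ]
    have e4 : (2 * j + 1).factorial = (2 * j + 1) * (2 * j).factorial := Nat.factorial_succ _
    rw [e1, e2, e3, e4]
    push_cast
    have h1 := fac_ne j
    have h2 := fac_ne (2 * j)
    have h3 := fac_ne (m + j + 1)
    field_simp
    ring
  calc ∑ j ∈ range (m + 1), ((3 * j : ℝ) - m) *
        ((j.factorial : ℝ) * ((m + j + 1).factorial : ℝ) / ((2 * j + 1).factorial : ℝ))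
      = ∑ j ∈ range (m + 1),
          ((fun j => -2 * (j.factorial : ℝ) * ((m + j + 1).factorial : ℝ)
            / ((2 * j).factorial : ℝ)) (j + 1)
          - (fun j => -2 * (j.factorial : ℝ) * ((m + j + 1).factorial : ℝ)
            / ((2 * j).factorial : ℝ)) j) :=
        Finset.sum_congr rfl fun j _ => hstep j
    _ = _ := by
        rw [Finset.sum_range_sub (fun j => -2 * (j.factorial : ℝ) *
          ((m + j + 1).factorial : ℝ) / ((2 * j).factorial : ℝ)) (m + 1)]
        simp only [Nat.factorial_zero]
        rw [show m + (m + 1) + 1 = 2 * m + 2 by omega, show 2 * (m + 1) = 2 * m + 2 by omega,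
          show m + 0 + 1 = m + 1 by omega]
        field_simp
        ring

lemma Lrec (m : ℕ) :
    LL (m + 1) = (2 * (2 * (m : ℝ) + 3) / 3) * LL m + ((m + 1).factorial : ℝ) := by
  have key := telescope m
  unfold LL
  rw [Finset.sum_range_succ]
  have e1 : ∀ j, (m + 1 + j + 1).factorial = (m + j + 2) * (m + j + 1).factorial := by
    intro j
    rw [show m + 1 + j + 1 = (m + j + 1) + 1 by omega, Nat.factorial_succ]
  have step : ∑ j ∈ range (m + 1),
      (j.factorial : ℝ) * ((m + 1 + j + 1).factorial : ℝ) / ((2 * j + 1).factorial : ℝ)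
      = (2 * (2 * (m : ℝ) + 3) / 3) * ∑ j ∈ range (m + 1),
          (j.factorial : ℝ) * ((m + j + 1).factorial : ℝ) / ((2 * j + 1).factorial : ℝ)
        + (1 / 3) * ∑ j ∈ range (m + 1), ((3 * j : ℝ) - m) *
          ((j.factorial : ℝ) * ((m + j + 1).factorial : ℝ) / ((2 * j + 1).factorial : ℝ)) := by
    rw [Finset.mul_sum, Finset.mul_sum, ← Finset.sum_add_distrib]
    refine Finset.sum_congr rfl fun j _ => ?_
    rw [e1 j]
    push_cast
    have h1 := fac_ne (2 * j + 1)
    field_simp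
    ring
  rw [step, key]
  rw [show m + 1 + (m + 1) + 1 = 2 * (m + 1) + 1 by omega]
  field_simp
  try ring

lemma N3 (m : ℕ) :
    (m.factorial : ℝ) * LL m = ((2 * m + 1).factorial : ℝ) / (3 : ℝ) ^ m * KK m := by
  induction m with
  | zero => simp [LL, KK]
  | succ m ih =>
    rw [Lrec m]
    have hK : KK (m + 1) = KK m + (3 : ℝ) ^ (m + 1) * ((( m + 1).factorial : ℝ)) ^ 2
        / ((2 * (m + 1) + 1).factorial : ℝ) := by
      unfold KK; rw [Finset.sum_range_succ]
    rw [hK]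
    have e1 : ((2 * (m + 1) + 1).factorial : ℝ)
        = (2 * (m : ℝ) + 3) * (2 * (m : ℝ) + 2) * ((2 * m + 1).factorial : ℝ) := by
      rw [show 2 * (m + 1) + 1 = 2 * m + 2 + 1 by omega, Nat.factorial_succ,
        show 2 * m + 2 = 2 * m + 1 + 1 by omega, Nat.factorial_succ]
      push_cast; ring
    have e2 : (((m + 1).factorial : ℝ)) = ((m : ℝ) + 1) * (m.factorial : ℝ) := by
      rw [Nat.factorial_succ]; push_cast; ring
    have hLL : LL m = ((2 * m + 1).factorial : ℝ) / (3 : ℝ) ^ m * KK m / (m.factorial : ℝ) := by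
      rw [← ih]; field_simp [fac_ne]
    rw [e1, e2, hLL]
    have h3 : (3 : ℝ) ^ m ≠ 0 := by positivity
    have h23 : (2 * (m : ℝ) + 3) ≠ 0 := by positivity
    have h22 : (2 * (m : ℝ) + 2) ≠ 0 := by positivity
    field_simp [fac_ne]
    ring

lemma poch_eq (m : ℕ) :
    poch (3 / 2 : ℝ) m = ((2 * m + 1).factorial : ℝ) / ((4 : ℝ) ^ m * (m.factorial : ℝ)) := by
  induction m with
  | zero => simp [poch]
  | succ m ih =>
    have : poch (3 / 2 : ℝ) (m + 1) = poch (3 / 2 : ℝ) m * (3 / 2 + m) := by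
      unfold poch; rw [Finset.prod_range_succ]
    rw [this, ih]
    have e1 : ((2 * (m + 1) + 1).factorial : ℝ)
        = (2 * (m : ℝ) + 3) * (2 * (m : ℝ) + 2) * ((2 * m + 1).factorial : ℝ) := by
      rw [show 2 * (m + 1) + 1 = 2 * m + 2 + 1 by omega, Nat.factorial_succ,
        show 2 * m + 2 = 2 * m + 1 + 1 by omega, Nat.factorial_succ]
      push_cast; ring
    have e2 : (((m + 1).factorial : ℝ)) = ((m : ℝ) + 1) * (m.factorial : ℝ) := by
      rw [Nat.factorial_succ]; push_cast; ring
    rw [e1, e2]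
    have h4 : (4 : ℝ) ^ m ≠ 0 := by positivity
    field_simp [fac_ne]
    ring

lemma KK_Icc (m : ℕ) :
    1 + ∑ s ∈ Finset.Icc 1 m,
      (3 : ℝ) ^ s * (s.factorial : ℝ) / ((4 : ℝ) ^ s * poch ((3 : ℝ) / 2) s) = KK m := by
  have per : ∀ s : ℕ, (3 : ℝ) ^ s * (s.factorial : ℝ) / ((4 : ℝ) ^ s * poch ((3 : ℝ) / 2) s)
      = (3 : ℝ) ^ s * (s.factorial : ℝ) ^ 2 / ((2 * s + 1).factorial : ℝ) := by
    intro s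
    rw [poch_eq]
    have h4 : (4 : ℝ) ^ s ≠ 0 := by positivity
    field_simp [fac_ne]
  unfold KK
  rw [Finset.sum_range_succ']
  have h0 : (3 : ℝ) ^ 0 * ((0:ℕ).factorial : ℝ) ^ 2 / (((2 * 0 + 1) : ℕ).factorial : ℝ) = 1 := by
    norm_num
  rw [h0]
  have : ∑ s ∈ Finset.Icc 1 m,
      (3 : ℝ) ^ s * (s.factorial : ℝ) / ((4 : ℝ) ^ s * poch ((3 : ℝ) / 2) s)
      = ∑ i ∈ range m, (3 : ℝ) ^ (i + 1) * (((i + 1).factorial : ℝ)) ^ 2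
          / ((2 * (i + 1) + 1).factorial : ℝ) := by
    rw [← Finset.Ico_add_one_right_eq_Icc, Finset.sum_Ico_eq_sum_range,
      show m + 1 - 1 = m by omega]
    refine Finset.sum_congr rfl fun i _ => ?_
    rw [per (1 + i), show 1 + i = i + 1 by omega]
  rw [this]
  ring

lemma assemble (m n : ℕ) :
    ∑ s ∈ range (m + 1), ∑ t ∈ range (n + 1), ∑ u ∈ range (s + t + 1),
      ((m.choose s : ℝ) * (n.choose t : ℝ) * ((s + t).choose u : ℝ)) *
        (((m - s + u).factorial : ℝ) * ((((m - s) + (s + t - u)).factorial : ℝ) *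
          ((s + (n - t)).factorial : ℝ)))
    = ((2 * m + n + 2).factorial : ℝ) / ((2 * m + 2).factorial : ℝ) * ((m.factorial : ℝ) * LL m)
    := by
  have main : ∀ s ∈ range (m + 1),
      (∑ t ∈ range (n + 1), ∑ u ∈ range (s + t + 1),
        ((m.choose s : ℝ) * (n.choose t : ℝ) * ((s + t).choose u : ℝ)) *
          (((m - s + u).factorial : ℝ) * ((((m - s) + (s + t - u)).factorial : ℝ) *
            ((s + (n - t)).factorial : ℝ))))
      = (((2 * m + n + 2).factorial : ℝ) / ((2 * m + 2).factorial : ℝ) * (m.factorial : ℝ)) *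
          (((m - s).factorial : ℝ) * ((m + (m - s) + 1).factorial : ℝ)
            / ((2 * (m - s) + 1).factorial : ℝ)) := by
    intro s hsm
    have hs : s ≤ m := Nat.lt_succ_iff.mp (Finset.mem_range.mp hsm)
    have inner : ∀ t ∈ range (n + 1),
        (∑ u ∈ range (s + t + 1),
          ((m.choose s : ℝ) * (n.choose t : ℝ) * ((s + t).choose u : ℝ)) *
            (((m - s + u).factorial : ℝ) * ((((m - s) + (s + t - u)).factorial : ℝ) *
              ((s + (n - t)).factorial : ℝ))))
        = ((m.choose s : ℝ) * (((m - s).factorial : ℝ) * ((m - s).factorial : ℝ)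
              / ((2 * (m - s) + 1).factorial : ℝ))) *
          ((n.choose t : ℝ) * ((s + (n - t)).factorial : ℝ) *
            (((2 * (m - s) + s + 1 + t).factorial : ℝ))) := by
      intro t _
      have e1 : ∀ u, ((m.choose s : ℝ) * (n.choose t : ℝ) * ((s + t).choose u : ℝ)) *
          (((m - s + u).factorial : ℝ) * ((((m - s) + (s + t - u)).factorial : ℝ) *
            ((s + (n - t)).factorial : ℝ)))
          = ((m.choose s : ℝ) * (n.choose t : ℝ) * ((s + (n - t)).factorial : ℝ)) *
            (((s + t).choose u : ℝ) * (((m - s) + (s + t - u)).factorial : ℝ) *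
              (((m - s) + u).factorial : ℝ)) := fun u => by ring
      rw [Finset.sum_congr rfl (fun u _ => e1 u), ← Finset.mul_sum, S2 (m - s) (m - s) (s + t)]
      rw [show (m - s) + (m - s) + (s + t) + 1 = 2 * (m - s) + s + 1 + t by omega,
        show (m - s) + (m - s) + 1 = 2 * (m - s) + 1 by omega]
      ring
    rw [Finset.sum_congr rfl inner, ← Finset.mul_sum, S2 (2 * (m - s) + s + 1) s n]
    rw [show 2 * (m - s) + s + 1 + s + n + 1 = 2 * m + n + 2 by omega,
      show 2 * (m - s) + s + 1 + s + 1 = 2 * m + 2 by omega,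
      show 2 * (m - s) + s + 1 = m + (m - s) + 1 by omega]
    have hm : (m.choose s : ℝ) * (s.factorial : ℝ) * ((m - s).factorial : ℝ)
        = (m.factorial : ℝ) := by
      exact_mod_cast congrArg (Nat.cast (R := ℝ))
        (Nat.choose_mul_factorial_mul_factorial hs)
    rw [← hm]
    ring
  rw [Finset.sum_congr rfl main, ← Finset.mul_sum]
  have hreflect := Finset.sum_range_reflect
    (fun j => (j.factorial : ℝ) * ((m + j + 1).factorial : ℝ) / ((2 * j + 1).factorial : ℝ))
    (m + 1)
  simp only [Nat.add_sub_cancel] at hreflect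
  unfold LL
  rw [← hreflect]
  ring

theorem stmt9 (m n : ℕ) :
    ∫ x : Fin 3 → ℝ in Set.univ.pi fun _ => Set.Ici (0 : ℝ),
        (x 0 * x 1 + x 0 * x 2 + x 1 * x 2) ^ m * (x 0 + x 1 + x 2) ^ n *
          Real.exp (-(x 0 + x 1 + x 2)) =
      (m.factorial : ℝ) * ((2 * m + n + 2).factorial : ℝ) * poch ((3 : ℝ) / 2) m /
          ((2 * m + 2).factorial : ℝ) *
        ((4 : ℝ) / 3) ^ m *
        (1 + ∑ s ∈ Finset.Icc 1 m,
          (3 : ℝ) ^ s * (s.factorial : ℝ) / ((4 : ℝ) ^ s * poch ((3 : ℝ) / 2) s)) := by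
  rw [reduce m n, assemble m n, N3 m, KK_Icc m, poch_eq m]
  have h3 : (3 : ℝ) ^ m ≠ 0 := by positivity
  have h4 : (4 : ℝ) ^ m ≠ 0 := by positivity
  rw [div_pow]
  field_simp [fac_ne]
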